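/- Let u : ℝ → ℝ^d be twice continuously differentiable, let t₀ ∈ ℝ, let p ≥ 2 be an integer, and let Δt₀ > 0. Let U, W : (0, Δt₀] → ℝ^d and Γ : (0, Δt₀] → ℝ, and suppose there are constants C₁, C₂, C₃ ≥ 0 such that for all Δt ∈ (0, Δt₀]: (i) ‖U(Δt) − u(t₀ + Δt)‖ ≤ C₁ Δt^{p+1} (the baseline method is of order p with u^n = u(t₀)); (ii) |Γ(Δt) − 1| ≤ C₂ Δt^{p−1}; (iii) ‖W(Δt) − [U(Δt) + (Γ(Δt) − 1)(U(Δt) − u(t₀))]‖ ≤ C₃ Δt^{p+1}. Then there exist C ≥ 0 and δ ∈ (0, Δt₀] such that ‖W(Δt) − u(t₀ + Γ(Δt)Δt)‖ ≤ C Δt^{p+1} for all Δt ∈ (0, δ], i.e., the relaxed update is also of order p. -/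

import Mathlib

/-- If the baseline approximation `U` is of order `p` (starting
from the exact value `u t₀`), the relaxation parameter satisfies
`Γ Δt = 1 + O(Δt^(p-1))`, and the relaxed update `W` agrees with
`U + (Γ - 1)(U - u t₀)` up to `O(Δt^(p+1))`, then `W Δt` approximates the exact
solution at the relaxed time `t₀ + Γ Δt * Δt` with order `p`. -/
theorem stmt_4 {d : ℕ} (u : ℝ → EuclideanSpace ℝ (Fin d)) (hu : ContDiff ℝ 2 u)
    (t₀ : ℝ) (p : ℕ) (hp : 2 ≤ p) (Δt₀ : ℝ) (hΔt₀ : 0 < Δt₀)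
    (U W : ℝ → EuclideanSpace ℝ (Fin d)) (Γ : ℝ → ℝ)
    (C₁ C₂ C₃ : ℝ) (hC₁ : 0 ≤ C₁) (hC₂ : 0 ≤ C₂) (hC₃ : 0 ≤ C₃)
    (h1 : ∀ Δt ∈ Set.Ioc (0 : ℝ) Δt₀, ‖U Δt - u (t₀ + Δt)‖ ≤ C₁ * Δt ^ (p + 1))
    (h2 : ∀ Δt ∈ Set.Ioc (0 : ℝ) Δt₀, |Γ Δt - 1| ≤ C₂ * Δt ^ (p - 1))
    (h3 : ∀ Δt ∈ Set.Ioc (0 : ℝ) Δt₀,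
      ‖W Δt - (U Δt + (Γ Δt - 1) • (U Δt - u t₀))‖ ≤ C₃ * Δt ^ (p + 1)) :
    ∃ C ≥ (0 : ℝ), ∃ δ ∈ Set.Ioc (0 : ℝ) Δt₀,
      ∀ Δt ∈ Set.Ioc (0 : ℝ) δ,
        ‖W Δt - u (t₀ + Γ Δt * Δt)‖ ≤ C * Δt ^ (p + 1) := by
  have hu' : Differentiable ℝ u ∧ ContDiff ℝ 1 (deriv u) := by
    rw [show (2 : WithTop ℕ∞) = 1 + 1 from rfl, contDiff_succ_iff_deriv] at hu
    exact ⟨hu.1, hu.2.2⟩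
  set g := deriv u with hg_def
  have hgdiff : Differentiable ℝ g := hu'.2.differentiable one_ne_zero
  have huderiv : ∀ x, HasDerivAt u (g x) x := fun x => (hu'.1 x).hasDerivAt
  have hg2cont : Continuous (deriv g) := hu'.2.continuous_deriv le_rfl
  set K : ℝ := 1 + C₂ * Δt₀ ^ (p - 1) with hK_def
  have hK1 : 1 ≤ K := le_add_of_nonneg_right (by positivity)
  have hK0 : (0:ℝ) < K := lt_of_lt_of_le one_pos hK1
  set a : ℝ := K * Δt₀ with ha_def
  have ha0 : 0 < a := mul_pos hK0 hΔt₀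
  obtain ⟨L₀, hL₀⟩ := (isCompact_Icc (a := t₀ - a) (b := t₀ + a)).exists_bound_of_continuousOn
      hg2cont.continuousOn
  set L : ℝ := max L₀ 0 with hL_def
  have hL0 : (0:ℝ) ≤ L := le_max_right _ _
  have hLip : ∀ x ∈ Set.Icc (t₀ - a) (t₀ + a), ∀ y ∈ Set.Icc (t₀ - a) (t₀ + a),
      ‖g y - g x‖ ≤ L * ‖y - x‖ := fun x hx y hy =>
    Convex.norm_image_sub_le_of_norm_hasDerivWithin_le
      (fun z _ => (hgdiff z).hasDerivAt.hasDerivWithinAt)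
      (fun z hz => le_trans (hL₀ z hz) (le_max_left _ _)) (convex_Icc _ _) hx hy
  refine ⟨C₃ + C₁ + C₂ * Δt₀ ^ (p-1) * C₁ + C₂ * (L * K) + L * K * C₂, by positivity,
    Δt₀, ⟨hΔt₀, le_rfl⟩, ?_⟩
  intro Δt hΔt
  obtain ⟨hΔtpos, hΔtle⟩ := hΔt
  have hΔt0 : (0:ℝ) ≤ Δt := hΔtpos.le
  have hmem : Δt ∈ Set.Ioc (0:ℝ) Δt₀ := ⟨hΔtpos, hΔtle⟩
  have hΓ := h2 Δt hmem
  have hΓ' : |Γ Δt - 1| ≤ C₂ * Δt₀ ^ (p-1) := by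
    refine hΓ.trans ?_
    exact mul_le_mul_of_nonneg_left (pow_le_pow_left₀ hΔt0 hΔtle _) hC₂
  have hΓabs : |Γ Δt| ≤ K := by
    calc |Γ Δt| = |Γ Δt - 1 + 1| := by ring_nf
    _ ≤ |Γ Δt - 1| + |(1:ℝ)| := abs_add_le _ _
    _ ≤ C₂ * Δt₀^(p-1) + 1 := by rw [abs_one]; linarith
    _ = K := by rw [hK_def]; ring
  -- auxiliary function
  set h : ℝ → EuclideanSpace ℝ (Fin d) := fun τ => u (t₀ + τ) - τ • g t₀ with hh_def
  have hhderiv : ∀ τ : ℝ, HasDerivAt h (g (t₀ + τ) - g t₀) τ := by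
    intro τ
    have ha : HasDerivAt (fun τ : ℝ => u (t₀ + τ)) (g (t₀ + τ)) τ := by
      have hinner : HasDerivAt (fun x : ℝ => t₀ + x) 1 τ := by
        simpa using (hasDerivAt_id τ).const_add t₀
      have := (huderiv (t₀ + τ)).scomp τ hinner
      rw [one_smul] at this
      exact this
    have hb : HasDerivAt (fun τ : ℝ => τ • g t₀) ((1:ℝ) • g t₀) τ :=
      (hasDerivAt_id τ).smul_const _
    have := ha.sub hb
    rw [one_smul] at this
    exact this
  have hKΔt : (0:ℝ) < K * Δt := mul_pos hK0 hΔtpos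
  set s : Set ℝ := Set.Icc (-(K * Δt)) (K * Δt) with hs_def
  have h0mem : (0:ℝ) ∈ s := ⟨by linarith, by linarith⟩
  have hΔtmem : Δt ∈ s := by
    constructor
    · linarith
    · nlinarith [mul_nonneg (sub_nonneg.mpr hK1) hΔt0]
  have hΓmem : Γ Δt * Δt ∈ s := by
    have : |Γ Δt * Δt| ≤ K * Δt := by
      rw [abs_mul, abs_of_nonneg hΔt0]
      exact mul_le_mul_of_nonneg_right hΓabs hΔt0
    exact abs_le.mp this
  have hbound : ∀ τ ∈ s, ‖g (t₀ + τ) - g t₀‖ ≤ L * (K * Δt) := by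
    intro τ hτ
    have hτa : |τ| ≤ a := by
      have : |τ| ≤ K * Δt := abs_le.mpr hτ
      refine this.trans ?_
      rw [ha_def]
      exact mul_le_mul_of_nonneg_left hΔtle hK0.le
    have hτ1 : t₀ + τ ∈ Set.Icc (t₀ - a) (t₀ + a) := by
      obtain ⟨h1', h2'⟩ := abs_le.mp hτa
      exact ⟨by linarith, by linarith⟩
    have ht₀ : t₀ ∈ Set.Icc (t₀ - a) (t₀ + a) := ⟨by linarith, by linarith⟩
    have := hLip t₀ ht₀ (t₀ + τ) hτ1
    rw [show t₀ + τ - t₀ = τ by ring] at this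
    refine this.trans ?_
    rw [Real.norm_eq_abs]
    exact mul_le_mul_of_nonneg_left (abs_le.mpr hτ) hL0
  have hMVT : ∀ x ∈ s, ∀ y ∈ s, ‖h y - h x‖ ≤ L * (K * Δt) * ‖y - x‖ := fun x hx y hy =>
    Convex.norm_image_sub_le_of_norm_hasDerivWithin_le
      (fun τ _ => (hhderiv τ).hasDerivWithinAt) hbound (convex_Icc _ _) hx hy
  -- key bounds
  have he1 := h3 Δt hmem
  have he2 := h1 Δt hmem
  have he3 : ‖h Δt - h 0‖ ≤ L * (K * Δt) * Δt := by
    have := hMVT 0 h0mem Δt hΔtmem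
    rwa [show ‖Δt - (0:ℝ)‖ = Δt by rw [sub_zero, Real.norm_eq_abs, abs_of_nonneg hΔt0]] at this
  have he4 : ‖h Δt - h (Γ Δt * Δt)‖ ≤ L * (K * Δt) * (C₂ * Δt ^ (p-1) * Δt) := by
    have hmvt := hMVT (Γ Δt * Δt) hΓmem Δt hΔtmem
    have hnorm : ‖Δt - Γ Δt * Δt‖ = |Γ Δt - 1| * Δt := by
      rw [Real.norm_eq_abs, show Δt - Γ Δt * Δt = (1 - Γ Δt) * Δt by ring, abs_mul,
        abs_sub_comm 1 (Γ Δt), abs_of_nonneg hΔt0]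
    rw [hnorm] at hmvt
    refine hmvt.trans ?_
    have : |Γ Δt - 1| * Δt ≤ C₂ * Δt ^ (p-1) * Δt := mul_le_mul_of_nonneg_right hΓ hΔt0
    exact mul_le_mul_of_nonneg_left this (by positivity)
  -- key identity
  have key : W Δt - u (t₀ + Γ Δt * Δt) =
      (W Δt - (U Δt + (Γ Δt - 1) • (U Δt - u t₀)))
      + (U Δt - u (t₀ + Δt))
      + (Γ Δt - 1) • (U Δt - u (t₀ + Δt))
      + (Γ Δt - 1) • (h Δt - h 0)
      + (h Δt - h (Γ Δt * Δt)) := by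
    simp only [hh_def, add_zero, zero_smul, sub_zero]
    module
  have hpow : Δt ^ (p-1) * Δt * Δt = Δt ^ (p+1) := by
    rw [← pow_succ, ← pow_succ]
    congr 1
    omega
  have hsum : ‖W Δt - u (t₀ + Γ Δt * Δt)‖ ≤
      ‖W Δt - (U Δt + (Γ Δt - 1) • (U Δt - u t₀))‖
      + ‖U Δt - u (t₀ + Δt)‖
      + ‖(Γ Δt - 1) • (U Δt - u (t₀ + Δt))‖
      + ‖(Γ Δt - 1) • (h Δt - h 0)‖
      + ‖h Δt - h (Γ Δt * Δt)‖ := by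
    rw [key]
    refine (norm_add_le _ _).trans ?_
    gcongr
    refine (norm_add_le _ _).trans ?_
    gcongr
    refine (norm_add_le _ _).trans ?_
    gcongr
    exact norm_add_le _ _
  have t3 : ‖(Γ Δt - 1) • (U Δt - u (t₀ + Δt))‖ ≤ C₂ * Δt₀ ^ (p-1) * C₁ * Δt^(p+1) := by
    rw [norm_smul, Real.norm_eq_abs]
    calc |Γ Δt - 1| * ‖U Δt - u (t₀ + Δt)‖ ≤ (C₂ * Δt₀^(p-1)) * (C₁ * Δt^(p+1)) :=
      mul_le_mul hΓ' he2 (norm_nonneg _) (by positivity)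
    _ = C₂ * Δt₀ ^ (p-1) * C₁ * Δt^(p+1) := by ring
  have t4 : ‖(Γ Δt - 1) • (h Δt - h 0)‖ ≤ C₂ * (L * K) * Δt^(p+1) := by
    rw [norm_smul, Real.norm_eq_abs]
    calc |Γ Δt - 1| * ‖h Δt - h 0‖ ≤ (C₂ * Δt^(p-1)) * (L * (K * Δt) * Δt) :=
      mul_le_mul hΓ he3 (norm_nonneg _) (by positivity)
    _ = C₂ * (L * K) * (Δt^(p-1) * Δt * Δt) := by ring
    _ = C₂ * (L * K) * Δt^(p+1) := by rw [hpow]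
  have t5 : ‖h Δt - h (Γ Δt * Δt)‖ ≤ L * K * C₂ * Δt^(p+1) := by
    refine he4.trans (le_of_eq ?_)
    calc L * (K * Δt) * (C₂ * Δt ^ (p-1) * Δt) = L * K * C₂ * (Δt^(p-1) * Δt * Δt) := by ring
    _ = L * K * C₂ * Δt^(p+1) := by rw [hpow]
  calc ‖W Δt - u (t₀ + Γ Δt * Δt)‖ ≤ _ := hsum
  _ ≤ C₃ * Δt^(p+1) + C₁ * Δt^(p+1) + C₂ * Δt₀ ^ (p-1) * C₁ * Δt^(p+1)
      + C₂ * (L * K) * Δt^(p+1) + L * K * C₂ * Δt^(p+1) := by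
    gcongr <;> first | exact he1 | exact he2 | exact t3 | exact t4 | exact t5 | exact le_rfl
  _ = (C₃ + C₁ + C₂ * Δt₀ ^ (p-1) * C₁ + C₂ * (L * K) + L * K * C₂) * Δt^(p+1) := by ring
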